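/- arXiv:1605.09607 — 6 statements merged into one kernel-verified Lean document; each statement's English description precedes it below -/
import Mathlib

section
/- For the measure μ(x,y) = exp(α·x(x-1)/2 + α·y(y-1)/2 + β·x·y) on Z₊², the total mass ∑_{(x,y)∈Z₊²} μ(x,y) is finite if and only if α < 0 and α + β < 0. -/
open Real

lemma aux_summable (a c : ℝ) (ha : a < 0) :
    Summable (fun n : ℕ => Real.exp (a * n * n + c * n)) := by
  have hgeo : Summable (fun n : ℕ => Real.exp (-1) ^ n) :=
    summable_geometric_of_lt_one (Real.exp_pos _).le
      (Real.exp_lt_one_iff.mpr (by norm_num))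
  apply summable_of_isBigO_nat hgeo
  rw [Asymptotics.isBigO_iff]
  refine ⟨1, ?_⟩
  filter_upwards [Filter.eventually_ge_atTop (⌈(1 + c) / (-a)⌉₊ + 1)] with n hn
  have hn1 : (1 : ℕ) ≤ n := le_trans (Nat.le_add_left 1 _) hn
  have hn2 : (1 + c) / (-a) ≤ (n : ℝ) := by
    calc (1 + c) / (-a) ≤ (⌈(1 + c) / (-a)⌉₊ : ℝ) := Nat.le_ceil _
    _ ≤ (n : ℝ) := by exact_mod_cast le_trans (Nat.le_add_right _ 1) hn
  have hna : 1 + c ≤ -a * n := by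
    rw [div_le_iff₀ (by linarith)] at hn2
    linarith
  have key : a * n * n + c * n ≤ -(n : ℝ) := by
    have hn1' : (1 : ℝ) ≤ (n : ℝ) := by exact_mod_cast hn1
    nlinarith [sq_nonneg ((n : ℝ) - 1)]
  have : Real.exp (a * n * n + c * n) ≤ Real.exp (-1) ^ n := by
    rw [← Real.exp_nat_mul]
    exact Real.exp_le_exp.mpr (by linarith)
  simpa [abs_of_nonneg (Real.exp_pos _).le,
    abs_of_nonneg (pow_nonneg (Real.exp_pos (-1)).le n)] using this

/-- The invariant measure `μ(x,y) = exp(α·x(x-1)/2 + α·y(y-1)/2 + β·x·y)` on `ℤ₊²`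
has finite total mass iff `α < 0` and `α + β < 0`. -/
theorem stmt_0 (α β : ℝ) :
    Summable (fun p : ℕ × ℕ =>
      Real.exp (α * ((p.1 : ℝ) * ((p.1 : ℝ) - 1) + (p.2 : ℝ) * ((p.2 : ℝ) - 1)) / 2
        + β * (p.1 : ℝ) * (p.2 : ℝ))) ↔ α < 0 ∧ α + β < 0 := by
  constructor
  · intro h
    have hα : α < 0 := by
      by_contra hα
      push_neg at hα
      have hinj : Function.Injective (fun n : ℕ => ((n, 0) : ℕ × ℕ)) :=
        fun a b hab => by simpa using congrArg Prod.fst hab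
      have h1 := h.comp_injective hinj
      have h2 := h1.tendsto_atTop_zero
      have h3 : ∀ n : ℕ, (1 : ℝ) ≤ Real.exp (α * ((n : ℝ) * ((n : ℝ) - 1) + 0 * (0 - 1)) / 2
          + β * n * 0) := by
        intro n
        rw [Real.one_le_exp_iff]
        rcases Nat.eq_zero_or_pos n with h | h
        · simp [h]
        · have : (1 : ℝ) ≤ (n : ℝ) := by exact_mod_cast h
          have : 0 ≤ (n : ℝ) * ((n : ℝ) - 1) := mul_nonneg (by linarith) (by linarith)
          have := mul_nonneg hα this
          simp only [mul_zero]
          linarith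
      have := (h2.eventually (eventually_lt_nhds (by norm_num : (0:ℝ) < 1))).exists
      obtain ⟨n, hn⟩ := this
      simp only [Function.comp_apply, Nat.cast_zero] at hn
      linarith [h3 n]
    refine ⟨hα, ?_⟩
    by_contra hαβ
    push_neg at hαβ
    have hinj : Function.Injective (fun n : ℕ => ((n, n) : ℕ × ℕ)) :=
      fun a b hab => by simpa using congrArg Prod.fst hab
    have h1 := h.comp_injective hinj
    have h2 := h1.tendsto_atTop_zero
    have h3 : ∀ n : ℕ, (1 : ℝ) ≤ Real.exp (α * ((n : ℝ) * ((n : ℝ) - 1) + (n : ℝ) * ((n : ℝ) - 1)) / 2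
        + β * n * n) := by
      intro n
      rw [Real.one_le_exp_iff]
      have hnn : (0 : ℝ) ≤ (n : ℝ) := Nat.cast_nonneg n
      have key : α * ((n : ℝ) * ((n : ℝ) - 1) + (n : ℝ) * ((n : ℝ) - 1)) / 2 + β * n * n
          = (α + β) * n * n + (-α) * n := by ring
      rw [key]
      have h4 : 0 ≤ (α + β) * n * n := mul_nonneg (mul_nonneg hαβ hnn) hnn
      have h5 : 0 ≤ (-α) * n := mul_nonneg (by linarith) hnn
      linarith
    obtain ⟨n, hn⟩ := (h2.eventually (eventually_lt_nhds (by norm_num : (0:ℝ) < 1))).exists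
    simp only [Function.comp_apply] at hn
    linarith [h3 n]
  · rintro ⟨hα, hαβ⟩
    set b : ℝ := max β 0 with hb
    have hb0 : 0 ≤ b := le_max_right _ _
    have ha : (α + b) / 2 < 0 := by
      rcases le_total β 0 with h | h
      · simp [hb, max_eq_right h]; linarith
      · simp [hb, max_eq_left h]; linarith
    have hg : Summable (fun n : ℕ => Real.exp ((α + b) / 2 * n * n + (-α / 2) * n)) :=
      aux_summable ((α + b) / 2) (-α / 2) ha
    have hgn : ∀ n : ℕ, 0 ≤ Real.exp ((α + b) / 2 * n * n + (-α / 2) * n) :=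
      fun n => (Real.exp_pos _).le
    have hprod : Summable (fun p : ℕ × ℕ =>
        Real.exp ((α + b) / 2 * p.1 * p.1 + (-α / 2) * p.1) *
        Real.exp ((α + b) / 2 * p.2 * p.2 + (-α / 2) * p.2)) :=
      hg.mul_of_nonneg hg hgn hgn
    apply Summable.of_nonneg_of_le (fun p => (Real.exp_pos _).le) _ hprod
    intro p
    rw [← Real.exp_add, Real.exp_le_exp]
    set x : ℝ := (p.1 : ℝ)
    set y : ℝ := (p.2 : ℝ)
    have hx : 0 ≤ x := Nat.cast_nonneg _
    have hy : 0 ≤ y := Nat.cast_nonneg _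
    -- need: α(x(x-1)+y(y-1))/2 + βxy ≤ a x² + (b/2-a)x + a y² + (b/2-a)y
    -- where a = (α+b)/2, i.e. RHS = (α/2)(x²-x) + (α/2)(y²-y) + (b/2)(x²+y²)
    have key : β * x * y ≤ (b / 2) * (x * x + y * y) := by
      rcases le_total β 0 with h | h
      · have hbe : b = 0 := max_eq_right h
        have : β * x * y ≤ 0 := by
          rcases mul_nonneg hx hy with hxy
          nlinarith
        simpa [hbe] using this
      · have hbe : b = β := max_eq_left h
        rw [hbe]
        nlinarith [sq_nonneg (x - y)]
    linarith [key]
end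

section
/- If F : ℝ₊ → (0,∞) is non-increasing with F(x) → 0 as x → ∞, and G : ℝ₊ → (0,∞) is non-decreasing with F(x)G(x) → ∞ as x → ∞, then for every ε ∈ (0,1) there exists a > 0 such that for all (x,y) ∈ Z₊² with x + y ≥ a and 0 ≤ y ≤ x, one has (F(x)G(y) + F(y)G(x))(1−ε) − 2(1+ε) ≥ 0. -/
open Filter

/-- Drift inequality for the Lyapunov function `f(x,y) = x + y` in Part 1)b) of Theorem 1:
if `F` is positive non-increasing with limit `0` and `G` is positive non-decreasing with
`F·G → ∞`, then for every `ε ∈ (0,1)` there is `a > 0` such that for all `(x,y) ∈ ℤ₊²`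
with `x + y ≥ a` and `y ≤ x`, `(F(x)G(y) + F(y)G(x))(1-ε) - 2(1+ε) ≥ 0`. -/
theorem stmt_2 (F G : ℝ → ℝ)
    (hFpos : ∀ x : ℝ, 0 ≤ x → 0 < F x)
    (hGpos : ∀ x : ℝ, 0 ≤ x → 0 < G x)
    (hFanti : AntitoneOn F (Set.Ici (0 : ℝ)))
    (hFlim : Tendsto F atTop (nhds 0))
    (hGmono : MonotoneOn G (Set.Ici (0 : ℝ)))
    (hFG : Tendsto (fun x => F x * G x) atTop atTop) :
    ∀ ε : ℝ, 0 < ε → ε < 1 → ∃ a : ℝ, 0 < a ∧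
      ∀ x y : ℕ, a ≤ (x : ℝ) + (y : ℝ) → y ≤ x →
        0 ≤ (F (x : ℝ) * G (y : ℝ) + F (y : ℝ) * G (x : ℝ)) * (1 - ε) - 2 * (1 + ε) := by
  intro ε hε hε1
  have h1ε : (0:ℝ) < 1 - ε := by linarith
  set C : ℝ := 2 * (1 + ε) / (1 - ε) with hC
  obtain ⟨M, hM⟩ := eventually_atTop.mp (hFG.eventually_ge_atTop C)
  refine ⟨max (2 * M) 1, lt_of_lt_of_le one_pos (le_max_right _ _), ?_⟩
  intro x y hxy hyx
  have hx0 : (0:ℝ) ≤ (x:ℝ) := Nat.cast_nonneg x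
  have hy0 : (0:ℝ) ≤ (y:ℝ) := Nat.cast_nonneg y
  have hyx' : (y:ℝ) ≤ (x:ℝ) := Nat.cast_le.mpr hyx
  have hxM : M ≤ (x:ℝ) := by
    have := le_max_left (2 * M) 1
    nlinarith [le_trans this hxy]
  have hFGx : C ≤ F (x:ℝ) * G (x:ℝ) := hM _ hxM
  have hFle : F (x:ℝ) ≤ F (y:ℝ) := hFanti hy0 hx0 hyx'
  have hGx : 0 < G (x:ℝ) := hGpos _ hx0
  have h2 : F (x:ℝ) * G (x:ℝ) ≤ F (y:ℝ) * G (x:ℝ) :=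
    mul_le_mul_of_nonneg_right hFle hGx.le
  have h3 : 0 < F (x:ℝ) * G (y:ℝ) := mul_pos (hFpos _ hx0) (hGpos _ hy0)
  have hCkey : C * (1 - ε) = 2 * (1 + ε) := div_mul_cancel₀ _ h1ε.ne'
  nlinarith [mul_le_mul_of_nonneg_right (le_trans hFGx h2) h1ε.le]
end

section
/- Let F be positive non-increasing and G positive non-decreasing on ℝ₊. For the discrete-time chain ζ(t) on Z₊² which from state (x,y) jumps to (x+1,y), (x,y+1), (x−1,y) (if x>0), (x,y−1) (if y>0) with probabilities proportional to F(x)G(y), F(y)G(x), 1, 1 respectively, the function f(x,y) = |x − y| satisfies E[f(ζ(t+1)) − f(ζ(t)) | ζ(t) = (x,y)] ≤ 0 whenever x ≠ y. -/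
/-- For the embedded discrete-time chain which from `(x,y)` jumps to `(x+1,y)`, `(x,y+1)`,
`(x−1,y)` (if `x > 0`), `(x,y−1)` (if `y > 0`) with probabilities proportional to
`F(x)G(y)`, `F(y)G(x)`, `1`, `1`, the one-step mean drift of `f(x,y) = |x − y|` is `≤ 0`
off the diagonal, when `F` is positive non-increasing and `G` positive non-decreasing. -/
theorem stmt_4 (F G : ℝ → ℝ)
    (hFpos : ∀ x : ℝ, 0 ≤ x → 0 < F x)
    (hGpos : ∀ x : ℝ, 0 ≤ x → 0 < G x)
    (hFanti : AntitoneOn F (Set.Ici (0 : ℝ)))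
    (hGmono : MonotoneOn G (Set.Ici (0 : ℝ))) :
    ∀ x y : ℕ, x ≠ y →
      ((|(x : ℝ) + 1 - (y : ℝ)| - |(x : ℝ) - (y : ℝ)|) * (F (x : ℝ) * G (y : ℝ))
        + (|(x : ℝ) - ((y : ℝ) + 1)| - |(x : ℝ) - (y : ℝ)|) * (F (y : ℝ) * G (x : ℝ))
        + (if 0 < x then |(x : ℝ) - 1 - (y : ℝ)| - |(x : ℝ) - (y : ℝ)| else 0)
        + (if 0 < y then |(x : ℝ) - ((y : ℝ) - 1)| - |(x : ℝ) - (y : ℝ)| else 0))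
      / (F (x : ℝ) * G (y : ℝ) + F (y : ℝ) * G (x : ℝ)
          + (if 0 < x then 1 else 0) + (if 0 < y then 1 else 0)) ≤ 0 := by
  intro x y hxy
  have hx0 : (0:ℝ) ≤ (x:ℝ) := Nat.cast_nonneg x
  have hy0 : (0:ℝ) ≤ (y:ℝ) := Nat.cast_nonneg y
  have hFx := hFpos _ hx0
  have hFy := hFpos _ hy0
  have hGx := hGpos _ hx0
  have hGy := hGpos _ hy0
  have hden : (0:ℝ) ≤ F (x : ℝ) * G (y : ℝ) + F (y : ℝ) * G (x : ℝ)
          + (if 0 < x then (1:ℝ) else 0) + (if 0 < y then (1:ℝ) else 0) := by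
    have h1 : (0:ℝ) ≤ (if 0 < x then (1:ℝ) else 0) := by positivity
    have h2 : (0:ℝ) ≤ (if 0 < y then (1:ℝ) else 0) := by positivity
    nlinarith [mul_pos hFx hGy, mul_pos hFy hGx]
  apply div_nonpos_of_nonpos_of_nonneg _ hden
  rcases lt_or_gt_of_ne hxy with hlt | hlt
  · -- x < y
    have hcast : (x:ℝ) + 1 ≤ (y:ℝ) := by exact_mod_cast Nat.succ_le_of_lt hlt
    have hFle : F (y:ℝ) ≤ F (x:ℝ) := hFanti hx0 hy0 (by linarith)
    have hGle : G (x:ℝ) ≤ G (y:ℝ) := hGmono hx0 hy0 (by linarith)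
    have hy1 : 0 < y := lt_of_le_of_lt (Nat.zero_le x) hlt
    have a1 : |(x : ℝ) + 1 - (y : ℝ)| = (y:ℝ) - ((x:ℝ)+1) := by
      rw [abs_of_nonpos (by linarith)]; ring
    have a2 : |(x : ℝ) - (y : ℝ)| = (y:ℝ) - (x:ℝ) := by
      rw [abs_of_nonpos (by linarith)]; ring
    have a3 : |(x : ℝ) - ((y : ℝ) + 1)| = (y:ℝ) + 1 - (x:ℝ) := by
      rw [abs_of_nonpos (by linarith)]; ring
    have a5 : |(x : ℝ) - ((y : ℝ) - 1)| = (y:ℝ) - 1 - (x:ℝ) := by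
      rw [abs_of_nonpos (by linarith)]; ring
    rw [a1, a2, a3, a5, if_pos hy1]
    have key : F (y:ℝ) * G (x:ℝ) - F (x:ℝ) * G (y:ℝ) ≤ 0 := by
      nlinarith
    have hif : (if 0 < x then |(x : ℝ) - 1 - (y : ℝ)| - ((y:ℝ) - (x:ℝ)) else 0) ≤ 1 := by
      split
      · have a4 : |(x : ℝ) - 1 - (y : ℝ)| = (y:ℝ) - ((x:ℝ)-1) := by
          rw [abs_of_nonpos (by linarith)]; ring
        rw [a4]; linarith
      · linarith
    nlinarith
  · -- y < x
    have hcast : (y:ℝ) + 1 ≤ (x:ℝ) := by exact_mod_cast Nat.succ_le_of_lt hlt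
    have hFle : F (x:ℝ) ≤ F (y:ℝ) := hFanti hy0 hx0 (by linarith)
    have hGle : G (y:ℝ) ≤ G (x:ℝ) := hGmono hy0 hx0 (by linarith)
    have hx1 : 0 < x := lt_of_le_of_lt (Nat.zero_le y) hlt
    have a1 : |(x : ℝ) + 1 - (y : ℝ)| = (x:ℝ) + 1 - (y:ℝ) :=
      abs_of_nonneg (by linarith)
    have a2 : |(x : ℝ) - (y : ℝ)| = (x:ℝ) - (y:ℝ) :=
      abs_of_nonneg (by linarith)
    have a3 : |(x : ℝ) - ((y : ℝ) + 1)| = (x:ℝ) - ((y:ℝ)+1) :=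
      abs_of_nonneg (by linarith)
    have a4 : |(x : ℝ) - 1 - (y : ℝ)| = (x:ℝ) - 1 - (y:ℝ) :=
      abs_of_nonneg (by linarith)
    rw [a1, a2, a3, a4, if_pos hx1]
    have key : F (x:ℝ) * G (y:ℝ) - F (y:ℝ) * G (x:ℝ) ≤ 0 := by
      nlinarith
    have hif : (if 0 < y then |(x : ℝ) - ((y:ℝ) - 1)| - ((x:ℝ) - (y:ℝ)) else 0) ≤ 1 := by
      split
      · have a5 : |(x : ℝ) - ((y : ℝ) - 1)| = (x:ℝ) - ((y:ℝ)-1) :=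
          abs_of_nonneg (by linarith)
        rw [a5]; linarith
      · linarith
    nlinarith
end

section
/- Let λ₁ ∈ (0,1], λ₂ > 0 with λ₁ + λ₂ > 1, and choose ν with 0 < ν < λ₁ + λ₂ − 1. Define f₀(x,0) = x^{−ν} for x > 0. Then there exists N such that for all integers x ≥ N: ((x+1)^{−ν} − x^{−ν})·(x+1)^{λ₁} + ((x−1)^{−ν} − x^{−ν}) + (1 − x^{−ν})·(x+1)^{−λ₂} ≤ 0. -/
open Real Filter Set

lemma mvt_rpow (ν : ℝ) {a b : ℝ} (ha : 0 < a) (hab : a < b) :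
    ∃ c ∈ Set.Ioo a b, b ^ (-ν) - a ^ (-ν) = -ν * c ^ (-ν - 1) * (b - a) := by
  have hcont : ContinuousOn (fun t : ℝ => t ^ (-ν)) (Set.Icc a b) := by
    apply ContinuousOn.rpow_const continuousOn_id
    intro t ht
    exact Or.inl (ne_of_gt (lt_of_lt_of_le ha ht.1))
  have hderiv : ∀ t ∈ Set.Ioo a b, HasDerivAt (fun t : ℝ => t ^ (-ν)) (-ν * t ^ (-ν - 1)) t := by
    intro t ht
    exact Real.hasDerivAt_rpow_const (Or.inl (ne_of_gt (lt_trans ha ht.1)))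
  obtain ⟨c, hc, hceq⟩ := exists_hasDerivAt_eq_slope (fun t : ℝ => t ^ (-ν))
    (fun t => -ν * t ^ (-ν - 1)) hab hcont hderiv
  refine ⟨c, hc, ?_⟩
  rw [hceq, div_mul_eq_mul_div, mul_div_assoc, div_self (sub_ne_zero.mpr hab.ne'), mul_one]

lemma bound_up (ν : ℝ) (hν0 : 0 < ν) {a : ℝ} (ha : 0 < a) :
    (a + 1) ^ (-ν) - a ^ (-ν) ≤ -ν * (a + 1) ^ (-ν - 1) := by
  obtain ⟨c, hc, heq⟩ := mvt_rpow ν ha (by linarith : a < a + 1)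
  rw [heq]
  have hc0 : 0 < c := lt_trans ha hc.1
  have hle : (a + 1) ^ (-ν - 1) ≤ c ^ (-ν - 1) :=
    Real.rpow_le_rpow_of_nonpos hc0 hc.2.le (by linarith)
  nlinarith [Real.rpow_pos_of_pos hc0 (-ν - 1)]

lemma bound_down (ν : ℝ) (hν0 : 0 < ν) {a : ℝ} (ha : 1 < a) :
    (a - 1) ^ (-ν) - a ^ (-ν) ≤ ν * (a - 1) ^ (-ν - 1) := by
  obtain ⟨c, hc, heq⟩ := mvt_rpow ν (by linarith : (0:ℝ) < a - 1) (by linarith : a - 1 < a)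
  have heq' : (a - 1) ^ (-ν) - a ^ (-ν) = ν * c ^ (-ν - 1) := by
    have : a - (a - 1) = 1 := by ring
    rw [this, mul_one] at heq
    linarith
  rw [heq']
  have hc0 : (0:ℝ) < a - 1 := by linarith
  have hle : c ^ (-ν - 1) ≤ (a - 1) ^ (-ν - 1) :=
    Real.rpow_le_rpow_of_nonpos hc0 hc.1.le (by linarith)
  nlinarith

/-- Drift inequality `Lf₀(x,0) ≤ 0` for the Lyapunov function `f₀(x,0) = x^{−ν}` in Lemma 1
(case `k = 0`): for `λ₁ ∈ (0,1]`, `λ₂ > 0` with `λ₁ + λ₂ > 1` and `0 < ν < λ₁ + λ₂ − 1`,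
the stated combination is `≤ 0` for all large enough integers `x`. -/
theorem stmt_11 (lam1 lam2 ν : ℝ) (h1 : 0 < lam1) (h1' : lam1 ≤ 1) (h2 : 0 < lam2)
    (hsum : 1 < lam1 + lam2) (hν0 : 0 < ν) (hν : ν < lam1 + lam2 - 1) :
    ∃ N : ℕ, ∀ x : ℕ, N ≤ x →
      (((x : ℝ) + 1) ^ (-ν) - (x : ℝ) ^ (-ν)) * ((x : ℝ) + 1) ^ lam1
        + (((x : ℝ) - 1) ^ (-ν) - (x : ℝ) ^ (-ν))
        + (1 - (x : ℝ) ^ (-ν)) * ((x : ℝ) + 1) ^ (-lam2) ≤ 0 := by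
  set δ : ℝ := lam1 + lam2 - 1 - ν with hδdef
  have hδ : 0 < δ := by simp [hδdef]; linarith
  set c : ℝ := ν * 2 ^ (lam1 - ν - 1) with hcdef
  have hc : 0 < c := mul_pos hν0 (Real.rpow_pos_of_pos two_pos _)
  -- tail bound
  have htend : Tendsto (fun X : ℝ => ν * 2 ^ (ν + 1) * X ^ (-lam1) + X ^ (-δ))
      atTop (nhds 0) := by
    have := ((tendsto_rpow_neg_atTop h1).const_mul (ν * 2 ^ (ν + 1))).add
      (tendsto_rpow_neg_atTop hδ)
    simpa using this
  have hev : ∀ᶠ X : ℝ in atTop, ν * 2 ^ (ν + 1) * X ^ (-lam1) + X ^ (-δ) ≤ c :=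
    htend.eventually_le_const hc
  obtain ⟨R, hR⟩ := eventually_atTop.mp hev
  refine ⟨max 2 ⌈R⌉₊, fun x hx => ?_⟩
  have hx2 : (2 : ℕ) ≤ x := le_trans (le_max_left _ _) hx
  set X : ℝ := (x : ℝ) with hXdef
  have hX2 : (2 : ℝ) ≤ X := by rw [hXdef]; exact_mod_cast hx2
  have hX0 : (0 : ℝ) < X := by linarith
  have hX1 : (1 : ℝ) < X := by linarith
  have hXR : R ≤ X := by
    have h1' : (⌈R⌉₊ : ℝ) ≤ X := by
      rw [hXdef]; exact_mod_cast le_trans (le_max_right 2 ⌈R⌉₊) hx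
    exact le_trans (Nat.le_ceil R) h1'
  have htail := hR X hXR
  -- term 1
  have hT1 : ((X + 1) ^ (-ν) - X ^ (-ν)) * (X + 1) ^ lam1 ≤
      -(c * X ^ (lam1 - ν - 1)) := by
    have hb := bound_up ν hν0 hX0
    have step1 : ((X + 1) ^ (-ν) - X ^ (-ν)) * (X + 1) ^ lam1 ≤
        (-ν * (X + 1) ^ (-ν - 1)) * (X + 1) ^ lam1 :=
      mul_le_mul_of_nonneg_right hb (Real.rpow_nonneg (by linarith) _)
    have step2 : (-ν * (X + 1) ^ (-ν - 1)) * (X + 1) ^ lam1 =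
        -ν * (X + 1) ^ (lam1 - ν - 1) := by
      rw [mul_assoc, ← Real.rpow_add (by linarith)]
      ring_nf
    have hXle : X + 1 ≤ 2 * X := by linarith
    have step3 : (2 * X) ^ (lam1 - ν - 1) ≤ (X + 1) ^ (lam1 - ν - 1) :=
      Real.rpow_le_rpow_of_nonpos (by linarith) hXle (by linarith)
    have step4 : (2 * X) ^ (lam1 - ν - 1) = 2 ^ (lam1 - ν - 1) * X ^ (lam1 - ν - 1) :=
      Real.mul_rpow (by norm_num) (by linarith)
    have : -ν * (X + 1) ^ (lam1 - ν - 1) ≤ -ν * (2 * X) ^ (lam1 - ν - 1) := by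
      nlinarith
    calc ((X + 1) ^ (-ν) - X ^ (-ν)) * (X + 1) ^ lam1
        ≤ -ν * (X + 1) ^ (lam1 - ν - 1) := by rw [← step2]; exact step1
      _ ≤ -ν * (2 * X) ^ (lam1 - ν - 1) := this
      _ = -(c * X ^ (lam1 - ν - 1)) := by rw [step4, hcdef]; ring
  -- term 2
  have hT2 : (X - 1) ^ (-ν) - X ^ (-ν) ≤ ν * 2 ^ (ν + 1) * X ^ (-ν - 1) := by
    have hb := bound_down ν hν0 hX1
    have hle : X / 2 ≤ X - 1 := by linarith
    have step1 : (X - 1) ^ (-ν - 1) ≤ (X / 2) ^ (-ν - 1) :=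
      Real.rpow_le_rpow_of_nonpos (by linarith) hle (by linarith)
    have step2 : (X / 2) ^ (-ν - 1) = 2 ^ (ν + 1) * X ^ (-ν - 1) := by
      rw [Real.div_rpow (by linarith) (by norm_num)]
      have h2 : (2:ℝ) ^ (-ν - 1) = ((2:ℝ) ^ (ν + 1))⁻¹ := by
        rw [← Real.rpow_neg (by norm_num : (0:ℝ) ≤ 2)]; ring_nf
      rw [h2]
      field_simp
    calc (X - 1) ^ (-ν) - X ^ (-ν) ≤ ν * (X - 1) ^ (-ν - 1) := hb
      _ ≤ ν * (X / 2) ^ (-ν - 1) := by nlinarith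
      _ = ν * 2 ^ (ν + 1) * X ^ (-ν - 1) := by rw [step2]; ring
  -- term 3
  have hT3 : (1 - X ^ (-ν)) * (X + 1) ^ (-lam2) ≤ X ^ (-lam2) := by
    have h01 : X ^ (-ν) ≤ 1 :=
      Real.rpow_le_one_of_one_le_of_nonpos (by linarith) (by linarith)
    have hp : (0:ℝ) ≤ (X + 1) ^ (-lam2) := Real.rpow_nonneg (by linarith) _
    calc (1 - X ^ (-ν)) * (X + 1) ^ (-lam2) ≤ 1 * (X + 1) ^ (-lam2) :=
          mul_le_mul_of_nonneg_right (by nlinarith [Real.rpow_nonneg hX0.le (-ν)]) hp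
      _ = (X + 1) ^ (-lam2) := one_mul _
      _ ≤ X ^ (-lam2) := Real.rpow_le_rpow_of_nonpos hX0 (by linarith) (by linarith)
  -- combine
  have hsplit1 : X ^ (-ν - 1) = X ^ (-lam1) * X ^ (lam1 - ν - 1) := by
    rw [← Real.rpow_add hX0]; ring_nf
  have hsplit2 : X ^ (-lam2) = X ^ (-δ) * X ^ (lam1 - ν - 1) := by
    rw [← Real.rpow_add hX0, hδdef]; ring_nf
  have hpow : (0:ℝ) < X ^ (lam1 - ν - 1) := Real.rpow_pos_of_pos hX0 _
  have hfinal : ν * 2 ^ (ν + 1) * X ^ (-ν - 1) + X ^ (-lam2) ≤ c * X ^ (lam1 - ν - 1) := by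
    rw [hsplit1, hsplit2]
    calc ν * 2 ^ (ν + 1) * (X ^ (-lam1) * X ^ (lam1 - ν - 1)) + X ^ (-δ) * X ^ (lam1 - ν - 1)
        = (ν * 2 ^ (ν + 1) * X ^ (-lam1) + X ^ (-δ)) * X ^ (lam1 - ν - 1) := by ring
      _ ≤ c * X ^ (lam1 - ν - 1) := mul_le_mul_of_nonneg_right htail hpow.le
  linarith
end

section
/- Let λ₁ ∈ (0,1), λ₂ > 0 with λ₁ + λ₂ ≤ 1, and 0 < ν₁ < 1. Define g₁(x,0) = x^{ν₁}. Then there exists N such that for all integers x ≥ N: ((x+1)^{ν₁} − x^{ν₁})·(x+1)^{λ₁} + ((x−1)^{ν₁} − x^{ν₁}) + (1 − x^{ν₁})·(x+1)^{−λ₂} ≤ 0. -/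
/-- Drift inequality `Lg₁(x,0) ≤ 0` in Lemma 2 (case `k = 1`): for `λ₁ ∈ (0,1)`, `λ₂ > 0`
with `λ₁ + λ₂ ≤ 1` and `0 < ν₁ < 1`, the stated combination is `≤ 0` for all large enough
integers `x`. -/
theorem stmt_12 (lam1 lam2 ν₁ : ℝ) (h1 : 0 < lam1) (h1' : lam1 < 1) (h2 : 0 < lam2)
    (hsum : lam1 + lam2 ≤ 1) (hν0 : 0 < ν₁) (hν1 : ν₁ < 1) :
    ∃ N : ℕ, ∀ x : ℕ, N ≤ x →
      (((x : ℝ) + 1) ^ ν₁ - (x : ℝ) ^ ν₁) * ((x : ℝ) + 1) ^ lam1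
        + (((x : ℝ) - 1) ^ ν₁ - (x : ℝ) ^ ν₁)
        + (1 - (x : ℝ) ^ ν₁) * ((x : ℝ) + 1) ^ (-lam2) ≤ 0 := by
  have htend : Filter.Tendsto (fun n : ℕ => (n : ℝ) ^ ν₁) Filter.atTop Filter.atTop :=
    (tendsto_rpow_atTop hν0).comp tendsto_natCast_atTop_atTop
  have hev : ∀ᶠ n : ℕ in Filter.atTop,
      (ν₁ + 1) / (1 - ν₁) ≤ (n : ℝ) ^ ν₁ := htend.eventually_ge_atTop _
  obtain ⟨N, hN⟩ := Filter.eventually_atTop.mp (hev.and (Filter.eventually_ge_atTop 1))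
  refine ⟨N, fun x hx => ?_⟩
  obtain ⟨hbig, hx1⟩ := hN x hx
  set y : ℝ := (x : ℝ) with hy
  have hy1 : (1 : ℝ) ≤ y := by rw [hy]; exact_mod_cast hx1
  have hy0 : (0 : ℝ) < y := by linarith
  have hkey : ν₁ + 1 ≤ (1 - ν₁) * y ^ ν₁ := by
    rw [div_le_iff₀ (by linarith)] at hbig
    linarith [hbig]
  -- B term
  have hB : (y - 1) ^ ν₁ ≤ y ^ ν₁ :=
    Real.rpow_le_rpow (by linarith) (by linarith) hν0.le
  -- A term: (y+1)^ν₁ ≤ y^ν₁ + ν₁ * y^(ν₁-1)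
  have hinv : (0 : ℝ) < 1 / y := by positivity
  have hbern : (1 + 1 / y) ^ ν₁ ≤ 1 + ν₁ * (1 / y) :=
    rpow_one_add_le_one_add_mul_self (by linarith) hν0.le hν1.le
  have hsplit : (y + 1) ^ ν₁ = y ^ ν₁ * (1 + 1 / y) ^ ν₁ := by
    rw [← Real.mul_rpow hy0.le (by linarith)]
    congr 1
    field_simp
  have hyy : y ^ ν₁ / y = y ^ (ν₁ - 1) := by
    rw [Real.rpow_sub hy0, Real.rpow_one]
  have hA : (y + 1) ^ ν₁ ≤ y ^ ν₁ + ν₁ * y ^ (ν₁ - 1) := by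
    calc (y + 1) ^ ν₁ = y ^ ν₁ * (1 + 1 / y) ^ ν₁ := hsplit
      _ ≤ y ^ ν₁ * (1 + ν₁ * (1 / y)) :=
          mul_le_mul_of_nonneg_left hbern (Real.rpow_nonneg hy0.le _)
      _ = y ^ ν₁ + ν₁ * (y ^ ν₁ / y) := by ring
      _ = y ^ ν₁ + ν₁ * y ^ (ν₁ - 1) := by rw [hyy]
  -- key drift inequality
  have hexp1 : y ^ (ν₁ - 1) * y = y ^ ν₁ := by
    rw [← Real.rpow_add_one hy0.ne' (ν₁ - 1)]; ring_nf
  have hsmall : y ^ (ν₁ - 1) ≤ 1 :=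
    Real.rpow_le_one_of_one_le_of_nonpos hy1 (by linarith)
  have hstep : ν₁ * y ^ (ν₁ - 1) * (y + 1) ≤ y ^ ν₁ - 1 := by
    have h0 : (0 : ℝ) ≤ y ^ (ν₁ - 1) := Real.rpow_nonneg hy0.le _
    nlinarith [hkey, hsmall, hexp1, mul_le_mul_of_nonneg_left hsmall hν0.le]
  have hpow : (y + 1) ^ (lam1 + lam2) ≤ y + 1 := by
    calc (y + 1) ^ (lam1 + lam2) ≤ (y + 1) ^ (1 : ℝ) :=
          Real.rpow_le_rpow_of_exponent_le (by linarith) hsum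
      _ = y + 1 := Real.rpow_one _
  have hdecomp : (y + 1) ^ lam1 = (y + 1) ^ (lam1 + lam2) * (y + 1) ^ (-lam2) := by
    rw [← Real.rpow_add (by linarith : (0:ℝ) < y + 1)]; ring_nf
  have hneg0 : (0 : ℝ) ≤ (y + 1) ^ (-lam2) := Real.rpow_nonneg (by linarith) _
  have hkey2 : ν₁ * y ^ (ν₁ - 1) * (y + 1) ^ lam1 ≤ (y ^ ν₁ - 1) * (y + 1) ^ (-lam2) := by
    rw [hdecomp, ← mul_assoc]
    refine mul_le_mul_of_nonneg_right ?_ hneg0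
    have h0 : (0 : ℝ) ≤ ν₁ * y ^ (ν₁ - 1) :=
      mul_nonneg hν0.le (Real.rpow_nonneg hy0.le _)
    calc ν₁ * y ^ (ν₁ - 1) * (y + 1) ^ (lam1 + lam2)
        ≤ ν₁ * y ^ (ν₁ - 1) * (y + 1) := mul_le_mul_of_nonneg_left hpow h0
      _ ≤ y ^ ν₁ - 1 := hstep
  have t1 : ((y + 1) ^ ν₁ - y ^ ν₁) * (y + 1) ^ lam1
      ≤ ν₁ * y ^ (ν₁ - 1) * (y + 1) ^ lam1 :=
    mul_le_mul_of_nonneg_right (by linarith) (Real.rpow_nonneg (by linarith) _)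
  have t3 : (1 - y ^ ν₁) * (y + 1) ^ (-lam2) = -((y ^ ν₁ - 1) * (y + 1) ^ (-lam2)) := by
    ring
  linarith [t1, hB, hkey2]
end

section
/- Let λ₁ > 1 and λ₂ > 0, and fix an integer m ≥ 0 and ν with 0 < ν < λ₁ − 1. Then there exist ε > 0 and N such that for all integers x ≥ N: ((x+1)^{−ν} − x^{−ν})·(x+1)^{λ₁}/(m+1)^{λ₂} + ((x−1)^{−ν} − x^{−ν}) + (1 − x^{−ν})·((m+1)^{λ₁}/(x+1)^{λ₂} + 1) ≤ −ε. -/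
/-- MVT bound: for `ν > 0` and `x ≥ 1`, `(x+1)^(-ν) - x^(-ν) ≤ -ν * (x+1)^(-ν-1)`. -/
lemma stmt_15_key (ν : ℝ) (hν0 : 0 < ν) (x : ℝ) (hx : 1 ≤ x) :
    (x + 1) ^ (-ν) - x ^ (-ν) ≤ -ν * (x + 1) ^ (-ν - 1) := by
  have hx0 : (0:ℝ) < x := lt_of_lt_of_le one_pos hx
  have hlt : x < x + 1 := by linarith
  obtain ⟨c, hc, hceq⟩ := exists_hasDerivAt_eq_slope (fun t => t ^ (-ν))
      (fun t => (-ν) * t ^ (-ν - 1)) hlt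
      (by
        apply ContinuousOn.rpow_const continuousOn_id
        intro t ht
        exact Or.inl (by simp only [id]; intro h; rw [h] at ht; exact absurd ht.1 (by norm_num; linarith))
      )
      (fun t ht => Real.hasDerivAt_rpow_const (Or.inl (ne_of_gt (lt_trans hx0 ht.1))))
  have hc0 : 0 < c := lt_trans hx0 hc.1
  have : (x + 1) ^ (-ν) - x ^ (-ν) = (-ν) * c ^ (-ν - 1) := by
    rw [hceq]; field_simp; ring
  rw [this]
  have hmono : (x + 1) ^ (-ν - 1) ≤ c ^ (-ν - 1) := by
    exact Real.rpow_le_rpow_of_nonpos hc0 (le_of_lt hc.2) (by linarith)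
  nlinarith [Real.rpow_pos_of_pos hc0 (-ν - 1)]

/-- Drift inequality `Lf(x,m) ≤ −ε` in Part 2 of Theorem 3: for `λ₁ > 1`, `λ₂ > 0`, an
integer `m ≥ 0` and `0 < ν < λ₁ − 1`, there are `ε > 0` and `N` such that for all integers
`x ≥ N` the stated combination is `≤ −ε`. -/
theorem stmt_15 (lam1 lam2 ν : ℝ) (m : ℕ) (h1 : 1 < lam1) (h2 : 0 < lam2)
    (hν0 : 0 < ν) (hν : ν < lam1 - 1) :
    ∃ ε : ℝ, 0 < ε ∧ ∃ N : ℕ, ∀ x : ℕ, N ≤ x →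
      (((x : ℝ) + 1) ^ (-ν) - (x : ℝ) ^ (-ν)) * (((x : ℝ) + 1) ^ lam1 / ((m : ℝ) + 1) ^ lam2)
        + (((x : ℝ) - 1) ^ (-ν) - (x : ℝ) ^ (-ν))
        + (1 - (x : ℝ) ^ (-ν)) * (((m : ℝ) + 1) ^ lam1 / ((x : ℝ) + 1) ^ lam2 + 1)
      ≤ -ε := by
  set α : ℝ := lam1 - ν - 1 with hα
  have hα0 : 0 < α := by simp [hα]; linarith
  set C : ℝ := ((m : ℝ) + 1) ^ lam2 with hC
  have hC0 : 0 < C := Real.rpow_pos_of_pos (by positivity) _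
  set K : ℝ := ((m : ℝ) + 1) ^ lam1 with hK
  have hK0 : 0 < K := Real.rpow_pos_of_pos (by positivity) _
  -- ν * (x+1)^α / C → ∞
  have htend : Filter.Tendsto (fun x : ℕ => ν * ((x : ℝ) + 1) ^ α / C)
      Filter.atTop Filter.atTop := by
    apply Filter.Tendsto.atTop_div_const hC0
    apply Filter.Tendsto.const_mul_atTop hν0
    apply Filter.Tendsto.comp (tendsto_rpow_atTop hα0)
    exact Filter.tendsto_atTop_add_const_right _ _ tendsto_natCast_atTop_atTop
  have hev : ∀ᶠ x : ℕ in Filter.atTop, K + 3 ≤ ν * ((x : ℝ) + 1) ^ α / C :=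
    htend.eventually_ge_atTop _
  obtain ⟨N₀, hN₀⟩ := Filter.eventually_atTop.mp hev
  refine ⟨1, one_pos, max N₀ 2, fun x hx => ?_⟩
  have hx2 : (2 : ℕ) ≤ x := le_trans (le_max_right _ _) hx
  have hxr : (2 : ℝ) ≤ (x : ℝ) := by exact_mod_cast hx2
  have hx0 : (0 : ℝ) < (x : ℝ) := by linarith
  have hx1 : (1 : ℝ) ≤ (x : ℝ) := by linarith
  have hbig : K + 3 ≤ ν * ((x : ℝ) + 1) ^ α / C := hN₀ x (le_trans (le_max_left _ _) hx)
  -- Term 1 bound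
  have hT1 : (((x : ℝ) + 1) ^ (-ν) - (x : ℝ) ^ (-ν)) * (((x : ℝ) + 1) ^ lam1 / C)
      ≤ -(ν * ((x : ℝ) + 1) ^ α / C) := by
    have hkey := stmt_15_key ν hν0 (x : ℝ) hx1
    have hpos : (0 : ℝ) < ((x : ℝ) + 1) ^ lam1 / C := by positivity
    have h := mul_le_mul_of_nonneg_right hkey hpos.le
    refine le_trans h (le_of_eq ?_)
    have hx1p : (0 : ℝ) < (x : ℝ) + 1 := by linarith
    have hmul : ((x : ℝ) + 1) ^ (-ν - 1) * ((x : ℝ) + 1) ^ lam1 = ((x : ℝ) + 1) ^ α := by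
      rw [← Real.rpow_add hx1p]; congr 1; simp [hα]; ring
    have heq : -ν * ((x : ℝ) + 1) ^ (-ν - 1) * (((x : ℝ) + 1) ^ lam1 / C)
        = -(ν * (((x : ℝ) + 1) ^ (-ν - 1) * ((x : ℝ) + 1) ^ lam1) / C) := by ring
    rw [heq, hmul]
  -- Term 2 bound
  have hT2 : ((x : ℝ) - 1) ^ (-ν) - (x : ℝ) ^ (-ν) ≤ 1 := by
    have h1' : ((x : ℝ) - 1) ^ (-ν) ≤ 1 :=
      Real.rpow_le_one_of_one_le_of_nonpos (by linarith) (by linarith)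
    have h2' : (0 : ℝ) ≤ (x : ℝ) ^ (-ν) := Real.rpow_nonneg hx0.le _
    linarith
  -- Term 3 bound
  have hT3 : (1 - (x : ℝ) ^ (-ν)) * (K / ((x : ℝ) + 1) ^ lam2 + 1) ≤ K + 1 := by
    have hf1 : 1 - (x : ℝ) ^ (-ν) ≤ 1 := by
      have : (0 : ℝ) ≤ (x : ℝ) ^ (-ν) := Real.rpow_nonneg hx0.le _
      linarith
    have hf1' : 0 ≤ 1 - (x : ℝ) ^ (-ν) := by
      have : (x : ℝ) ^ (-ν) ≤ 1 :=
        Real.rpow_le_one_of_one_le_of_nonpos hx1 (by linarith)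
      linarith
    have hd : (1 : ℝ) ≤ ((x : ℝ) + 1) ^ lam2 :=
      Real.one_le_rpow (by linarith) h2.le
    have hf2 : K / ((x : ℝ) + 1) ^ lam2 + 1 ≤ K + 1 := by
      have : K / ((x : ℝ) + 1) ^ lam2 ≤ K / 1 := by
        apply div_le_div_of_nonneg_left hK0.le one_pos hd
      simp at this; linarith
    have hf2' : 0 ≤ K / ((x : ℝ) + 1) ^ lam2 + 1 := by positivity
    calc (1 - (x : ℝ) ^ (-ν)) * (K / ((x : ℝ) + 1) ^ lam2 + 1)
        ≤ 1 * (K / ((x : ℝ) + 1) ^ lam2 + 1) := mul_le_mul_of_nonneg_right hf1 hf2'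
      _ = K / ((x : ℝ) + 1) ^ lam2 + 1 := one_mul _
      _ ≤ K + 1 := hf2
  linarith
end
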